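/- If the ground state energy E := inf σ(H_V) > -∞ of the discrete Schrödinger operator H_V = -Δ + V on ℓ²(Z^d) is an eigenvalue, then E is a simple eigenvalue and the corresponding eigenvector can be chosen strictly positive. -/

import Mathlib

open scoped BigOperators

noncomputable section

/-- Euclidean norm of a lattice point in `ℤ^d`. -/
def znorm {d : ℕ} (v : Fin d → ℤ) : ℝ := Real.sqrt (∑ j, ((v j : ℝ))^2)

/-- The discrete Laplacian `(-Δψ)_n = Σ_{|m-n|=1} (ψ_n - ψ_m)`. -/
def negLap {d : ℕ} (ψ : (Fin d → ℤ) → ℝ) (n : Fin d → ℤ) : ℝ :=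
  ∑ᶠ (m : Fin d → ℤ) (_ : znorm (m - n) = 1), (ψ n - ψ m)

open Finset Function Filter Topology

variable {d : ℕ}

/-- The set of lattice neighbors of `n`. -/
def nbr (n : Fin d → ℤ) : Finset (Fin d → ℤ) :=
  Finset.image (fun p : Fin d × Bool =>
    Function.update n p.1 (n p.1 + if p.2 then 1 else -1)) Finset.univ

lemma znorm_eq_one_iff (v : Fin d → ℤ) : znorm v = 1 ↔ ∑ j, (v j)^2 = 1 := by
  unfold znorm
  rw [Real.sqrt_eq_one]
  constructor
  · intro h
    have : ((∑ j, (v j)^2 : ℤ) : ℝ) = 1 := by push_cast; exact h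
    exact_mod_cast this
  · intro h
    have : ((∑ j, (v j)^2 : ℤ) : ℝ) = 1 := by exact_mod_cast h
    push_cast at this; exact this

lemma int_sum_sq_eq_one {v : Fin d → ℤ} :
    (∑ j, (v j)^2 = 1) ↔ ∃ j, (v j = 1 ∨ v j = -1) ∧ ∀ i, i ≠ j → v i = 0 := by
  constructor
  · intro h
    have hex : ∃ j, v j ≠ 0 := by
      by_contra h'
      push_neg at h'
      simp [h'] at h
    obtain ⟨j, hj⟩ := hex
    have h1 : 1 ≤ v j ^ 2 := by
      have := Int.one_le_abs (by exact hj)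
      nlinarith [sq_abs (v j)]
    have herase : ∑ i ∈ Finset.univ.erase j, v i ^2 + v j ^2 = 1 := by
      rw [Finset.sum_erase_add _ _ (Finset.mem_univ j)]; exact h
    have hnn : ∀ i ∈ Finset.univ.erase j, 0 ≤ v i ^ 2 := fun i _ => sq_nonneg _
    have hsum0 : ∑ i ∈ Finset.univ.erase j, v i ^2 = 0 := by
      have := Finset.sum_nonneg hnn
      linarith
    have hz : ∀ i, i ≠ j → v i = 0 := by
      intro i hi
      have := (Finset.sum_eq_zero_iff_of_nonneg hnn).mp hsum0 i
        (Finset.mem_erase.mpr ⟨hi, Finset.mem_univ i⟩)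
      exact by nlinarith [this, sq_nonneg (v i)]
    have hj2 : v j ^ 2 = 1 := by linarith
    have : v j * v j = 1 := by nlinarith
    exact ⟨j, Int.isUnit_iff.mp (IsUnit.of_mul_eq_one _ this), hz⟩
  · rintro ⟨j, hj, h0⟩
    rw [Finset.sum_eq_single_of_mem j (Finset.mem_univ j)
      (fun i _ hi => by rw [h0 i hi]; ring)]
    rcases hj with h | h <;> rw [h] <;> ring

lemma mem_nbr {n m : Fin d → ℤ} : m ∈ nbr n ↔ znorm (m - n) = 1 := by
  rw [znorm_eq_one_iff, int_sum_sq_eq_one]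
  constructor
  · rintro hm
    simp only [nbr, Finset.mem_image, Finset.mem_univ, true_and] at hm
    obtain ⟨⟨j, b⟩, rfl⟩ := hm
    refine ⟨j, ?_, ?_⟩
    · simp only [Pi.sub_apply, Function.update_self]
      cases b <;> simp
    · intro i hi
      simp [Pi.sub_apply, Function.update_of_ne hi]
  · rintro ⟨j, hj, h0⟩
    simp only [nbr, Finset.mem_image, Finset.mem_univ, true_and]
    have hm : m = Function.update n j (n j + (m - n) j) := by
      funext i
      by_cases hij : i = j
      · subst hij; simp [Pi.sub_apply]
      · rw [Function.update_of_ne hij]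
        have := h0 i hij
        simp only [Pi.sub_apply] at this
        omega
    rcases hj with h | h
    · exact ⟨(j, true), by rw [hm]; simp [h]⟩
    · exact ⟨(j, false), by rw [hm]; simp [h]⟩

lemma nbr_symm {n m : Fin d → ℤ} : m ∈ nbr n ↔ n ∈ nbr m := by
  rw [mem_nbr, mem_nbr, znorm_eq_one_iff, znorm_eq_one_iff]
  have key : ∀ a b : Fin d → ℤ, ∑ j, (a - b) j ^ 2 = ∑ j, (b - a) j ^ 2 := by
    intro a b
    apply Finset.sum_congr rfl
    intro j _
    simp only [Pi.sub_apply]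
    ring
  rw [key]

lemma self_not_mem_nbr (n : Fin d → ℤ) : n ∉ nbr n := by
  rw [mem_nbr, znorm_eq_one_iff]
  simp

lemma card_nbr_le (n : Fin d → ℤ) : (nbr n).card ≤ 2 * d := by
  calc (nbr n).card ≤ (Finset.univ : Finset (Fin d × Bool)).card := Finset.card_image_le
  _ = 2 * d := by simp [Finset.card_univ]; ring

lemma update_mem_nbr (n : Fin d → ℤ) (j : Fin d) (e : ℤ) (he : e = 1 ∨ e = -1) :
    Function.update n j (n j + e) ∈ nbr n := by
  simp only [nbr, Finset.mem_image, Finset.mem_univ, true_and]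
  rcases he with h | h
  · exact ⟨(j, true), by rw [h]; simp⟩
  · exact ⟨(j, false), by rw [h]; simp⟩

/-- Summed neighbor values. -/
def S (ψ : (Fin d → ℤ) → ℝ) (n : Fin d → ℤ) : ℝ := ∑ m ∈ nbr n, ψ m

lemma negLap_eq (ψ : (Fin d → ℤ) → ℝ) (n : Fin d → ℤ) :
    negLap ψ n = ((nbr n).card : ℝ) * ψ n - S ψ n := by
  classical
  have h1 : negLap ψ n = ∑ m ∈ nbr n, (ψ n - ψ m) := by
    unfold negLap
    have h2 : ∀ m : Fin d → ℤ, (∑ᶠ _ : znorm (m - n) = 1, (ψ n - ψ m))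
        = if znorm (m - n) = 1 then ψ n - ψ m else 0 := fun m => finsum_eq_if
    rw [finsum_congr h2]
    rw [finsum_eq_sum_of_support_subset _ (s := nbr n) ?_]
    · apply Finset.sum_congr rfl
      intro m hm
      rw [if_pos (mem_nbr.mp hm)]
    · intro m hm
      simp only [Function.mem_support, ne_eq, ite_eq_right_iff, not_forall] at hm
      exact mem_nbr.mpr hm.1
  rw [h1, Finset.sum_sub_distrib, Finset.sum_const, nsmul_eq_mul, S]

/-- The lbox `[-R, R]^d`. -/
def lbox (d R : ℕ) : Finset (Fin d → ℤ) :=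
  Fintype.piFinset fun _ => Finset.Icc (-(R:ℤ)) (R:ℤ)

lemma mem_lbox {R : ℕ} {n : Fin d → ℤ} :
    n ∈ lbox d R ↔ ∀ j, -(R:ℤ) ≤ n j ∧ n j ≤ R := by
  unfold lbox
  simp [Fintype.mem_piFinset, Finset.mem_Icc]

lemma lbox_mono {R R' : ℕ} (h : R ≤ R') : lbox d R ⊆ lbox d R' := by
  intro n hn
  rw [mem_lbox] at hn ⊢
  intro j
  have := hn j
  have : (R:ℤ) ≤ R' := by exact_mod_cast h
  constructor <;> omega

lemma nbr_lbox {R : ℕ} {n : Fin d → ℤ} (hn : n ∈ lbox d R) : nbr n ⊆ lbox d (R+1) := by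
  intro m hm
  simp only [nbr, Finset.mem_image, Finset.mem_univ, true_and] at hm
  obtain ⟨⟨j, b⟩, rfl⟩ := hm
  rw [mem_lbox] at hn ⊢
  intro i
  by_cases hij : i = j
  · subst hij
    rw [Function.update_self]
    have := hn i
    cases b <;> simp <;> push_cast <;> omega
  · rw [Function.update_of_ne hij]
    have := hn i
    push_cast
    omega

lemma exists_lbox (n : Fin d → ℤ) : ∃ R : ℕ, ∀ R' ≥ R, n ∈ lbox d R' := by
  refine ⟨Finset.univ.sup fun j => (n j).natAbs, fun R' hR' => ?_⟩
  rw [mem_lbox]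
  intro j
  have h1 : (n j).natAbs ≤ Finset.univ.sup fun j => (n j).natAbs :=
    Finset.le_sup (f := fun j => (n j).natAbs) (Finset.mem_univ j)
  omega

lemma mem_lbox_self (n : Fin d → ℤ) : ∃ R : ℕ, n ∈ lbox d R := by
  obtain ⟨R, hR⟩ := exists_lbox n
  exact ⟨R, hR R le_rfl⟩

/-- Connectivity of the lattice: a property that holds at one point and propagates
to neighbors holds everywhere. -/
lemma spread {Q : (Fin d → ℤ) → Prop} {n0 : Fin d → ℤ} (h0 : Q n0)
    (hstep : ∀ a, Q a → ∀ m ∈ nbr a, Q m) : ∀ n, Q n := by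
  have key : ∀ k : ℕ, ∀ n : Fin d → ℤ, (∑ j, ((n j - n0 j).natAbs)) = k → Q n := by
    intro k
    induction k with
    | zero =>
      intro n hn
      have : ∀ j, (n j - n0 j).natAbs = 0 := by
        intro j
        exact Finset.sum_eq_zero_iff.mp hn j (Finset.mem_univ j)
      have : n = n0 := by funext j; have := this j; omega
      rwa [this]
    | succ k ih =>
      intro n hn
      have hex : ∃ j, n j ≠ n0 j := by
        by_contra h'
        push_neg at h'
        simp [h'] at hn
      obtain ⟨j, hj⟩ := hex
      set e : ℤ := if n j < n0 j then 1 else -1 with he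
      set m := Function.update n j (n j + e) with hm
      have hmj : m j = n j + e := Function.update_self _ _ _
      have hstepj : (m j - n0 j).natAbs + 1 = (n j - n0 j).natAbs := by
        rw [hmj, he]
        split_ifs with h <;> omega
      have hdist : ∑ j', ((m j' - n0 j').natAbs) = k := by
        have h1 : ∑ j' ∈ Finset.univ.erase j, ((m j' - n0 j').natAbs)
            = ∑ j' ∈ Finset.univ.erase j, ((n j' - n0 j').natAbs) := by
          apply Finset.sum_congr rfl
          intro i hi
          rw [hm, Function.update_of_ne (Finset.mem_erase.mp hi).1]
        have h2 : ∑ j' ∈ Finset.univ.erase j, ((m j' - n0 j').natAbs) + (m j - n0 j).natAbs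
            = ∑ j', ((m j' - n0 j').natAbs) :=
          Finset.sum_erase_add _ _ (Finset.mem_univ j)
        have h3 : ∑ j' ∈ Finset.univ.erase j, ((n j' - n0 j').natAbs) + (n j - n0 j).natAbs
            = ∑ j', ((n j' - n0 j').natAbs) :=
          Finset.sum_erase_add _ _ (Finset.mem_univ j)
        omega
      have hQm : Q m := ih m hdist
      have hnm : n ∈ nbr m := by
        have : n = Function.update m j (m j + (-e)) := by
          funext i
          by_cases hij : i = j
          · subst hij
            rw [Function.update_self, hmj]; ring
          · rw [Function.update_of_ne hij, hm, Function.update_of_ne hij]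
        rw [this]
        apply update_mem_nbr
        rw [he]
        split_ifs <;> simp
      exact hstep m hQm n hnm
  intro n
  exact key _ n rfl

/-- The diagonal coefficient `deg + V - E`. -/
def cc (V : (Fin d → ℤ) → ℝ) (E : ℝ) (n : Fin d → ℤ) : ℝ := ((nbr n).card : ℝ) + V n - E

/-- Finset form of the quadratic-form inequality. -/
lemma master {V : (Fin d → ℤ) → ℝ} {E : ℝ}
    (hform : ∀ φ : (Fin d → ℤ) → ℝ, (Function.support φ).Finite →
      E * ∑ᶠ n, φ n ^ 2 ≤ ∑ᶠ n, (φ n * negLap φ n + V n * φ n ^ 2))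
    (φ : (Fin d → ℤ) → ℝ) (s : Finset (Fin d → ℤ)) (h : ∀ n, n ∉ s → φ n = 0) :
    ∑ n ∈ s, φ n * S φ n ≤ ∑ n ∈ s, cc V E n * φ n ^ 2 := by
  classical
  have hsupp : Function.support φ ⊆ ↑s := by
    intro n hn
    by_contra hns
    exact hn (h n hns)
  have hfin : (Function.support φ).Finite := Set.Finite.subset s.finite_toSet hsupp
  have h1 := hform φ hfin
  have e1 : ∑ᶠ n, φ n ^ 2 = ∑ n ∈ s, φ n ^ 2 := by
    apply finsum_eq_sum_of_support_subset
    intro n hn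
    apply hsupp
    simp only [Function.mem_support] at hn ⊢
    intro h0
    exact hn (by rw [h0]; ring)
  have e2 : ∑ᶠ n, (φ n * negLap φ n + V n * φ n ^ 2)
      = ∑ n ∈ s, (φ n * negLap φ n + V n * φ n ^ 2) := by
    apply finsum_eq_sum_of_support_subset
    intro n hn
    apply hsupp
    simp only [Function.mem_support] at hn ⊢
    intro h0
    exact hn (by rw [h0]; ring)
  rw [e1, e2] at h1
  have e3 : ∑ n ∈ s, (φ n * negLap φ n + V n * φ n ^ 2)
      = ∑ n ∈ s, (cc V E n * φ n ^ 2 + E * φ n ^ 2 - φ n * S φ n) := by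
    apply Finset.sum_congr rfl
    intro n _
    rw [negLap_eq, cc]
    ring
  rw [e3, Finset.sum_sub_distrib, Finset.sum_add_distrib, ← Finset.mul_sum] at h1
  linarith

/-- Boundary term for the truncated eigenfunction. -/
def Out (ψ : (Fin d → ℤ) → ℝ) (R : ℕ) : ℝ :=
  ∑ n ∈ lbox d R, |ψ n| * ∑ m ∈ nbr n \ lbox d R, |ψ m|

lemma out_nonneg (ψ : (Fin d → ℤ) → ℝ) (R : ℕ) : 0 ≤ Out ψ R := by
  apply Finset.sum_nonneg
  intro n _
  exact mul_nonneg (abs_nonneg _) (Finset.sum_nonneg fun m _ => abs_nonneg _)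

lemma swap_bound (g : (Fin d → ℤ) → ℝ) (hg : ∀ x, 0 ≤ g x) (R : ℕ) :
    ∑ n ∈ lbox d R, ∑ m ∈ nbr n \ lbox d R, g m
      ≤ (2*d : ℝ) * ∑ m ∈ lbox d (R+1) \ lbox d R, g m := by
  classical
  set B := lbox d R
  set sh := lbox d (R+1) \ lbox d R with hsh
  have step1 : ∑ n ∈ B, ∑ m ∈ nbr n \ B, g m
      ≤ ∑ n ∈ B, ∑ m ∈ sh, if m ∈ nbr n then g m else 0 := by
    apply Finset.sum_le_sum
    intro n hn
    rw [← Finset.sum_filter]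
    apply Finset.sum_le_sum_of_subset_of_nonneg
    · intro m hm
      rw [Finset.mem_sdiff] at hm
      rw [Finset.mem_filter, hsh, Finset.mem_sdiff]
      exact ⟨⟨nbr_lbox hn hm.1, hm.2⟩, hm.1⟩
    · intro m _ _
      exact hg m
  have step2 : ∑ n ∈ B, ∑ m ∈ sh, (if m ∈ nbr n then g m else 0)
      = ∑ m ∈ sh, ∑ n ∈ B, (if m ∈ nbr n then g m else 0) := Finset.sum_comm
  have step3 : ∀ m ∈ sh, ∑ n ∈ B, (if m ∈ nbr n then g m else 0) ≤ (2*d : ℝ) * g m := by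
    intro m _
    have e1 : ∑ n ∈ B, (if m ∈ nbr n then g m else 0)
        = ∑ n ∈ B.filter (fun n => m ∈ nbr n), g m := (Finset.sum_filter _ _).symm
    rw [e1, Finset.sum_const]
    have hcard : (B.filter (fun n => m ∈ nbr n)).card ≤ 2 * d := by
      apply le_trans (Finset.card_le_card (t := nbr m) ?_) (card_nbr_le m)
      intro n hn
      rw [Finset.mem_filter] at hn
      exact nbr_symm.mp hn.2
    rw [nsmul_eq_mul]
    apply mul_le_mul_of_nonneg_right _ (hg m)
    exact_mod_cast hcard
  calc ∑ n ∈ B, ∑ m ∈ nbr n \ B, g m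
      ≤ ∑ n ∈ B, ∑ m ∈ sh, (if m ∈ nbr n then g m else 0) := step1
    _ = ∑ m ∈ sh, ∑ n ∈ B, (if m ∈ nbr n then g m else 0) := step2
    _ ≤ ∑ m ∈ sh, (2*d : ℝ) * g m := Finset.sum_le_sum step3
    _ = (2*d : ℝ) * ∑ m ∈ sh, g m := by rw [Finset.mul_sum]

lemma out_tendsto (ψ : (Fin d → ℤ) → ℝ) (hsum : Summable fun n => ψ n ^ 2) :
    Filter.Tendsto (fun R => Out ψ R) Filter.atTop (nhds 0) := by
  classical
  set A := ∑' n, ψ n ^ 2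
  set a : ℕ → ℝ := fun R => ∑ n ∈ lbox d R, ψ n ^ 2 with ha
  have hboxt : Filter.Tendsto (fun R => lbox d R) Filter.atTop Filter.atTop := by
    apply tendsto_atTop_finset_of_monotone
    · intro R R' h
      exact lbox_mono h
    · intro x
      obtain ⟨R, hR⟩ := mem_lbox_self x
      exact ⟨R, hR⟩
  have hat : Filter.Tendsto a Filter.atTop (nhds A) :=
    (hsum.hasSum.comp hboxt)
  -- bound
  have key : ∀ R : ℕ, Out ψ (R+1) ≤ (d:ℝ) * (a (R+1) - a R) + (d:ℝ) * (a (R+2) - a (R+1)) := by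
    intro R
    set B := lbox d (R+1) with hB
    have hout : Out ψ (R+1) ≤ (1/2) * (∑ n ∈ B, ∑ m ∈ nbr n \ B, ψ n ^ 2)
        + (1/2) * (∑ n ∈ B, ∑ m ∈ nbr n \ B, ψ m ^ 2) := by
      have h1 : ∀ n ∈ B, |ψ n| * ∑ m ∈ nbr n \ B, |ψ m|
          ≤ (1/2) * (∑ m ∈ nbr n \ B, ψ n ^ 2) + (1/2) * (∑ m ∈ nbr n \ B, ψ m ^ 2) := by
        intro n _
        rw [Finset.mul_sum, Finset.mul_sum, Finset.mul_sum, ← Finset.sum_add_distrib]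
        apply Finset.sum_le_sum
        intro m _
        nlinarith [sq_nonneg (|ψ n| - |ψ m|), sq_abs (ψ n), sq_abs (ψ m),
          abs_nonneg (ψ n), abs_nonneg (ψ m)]
      calc Out ψ (R+1) ≤ ∑ n ∈ B, ((1/2) * (∑ m ∈ nbr n \ B, ψ n ^ 2)
            + (1/2) * (∑ m ∈ nbr n \ B, ψ m ^ 2)) := Finset.sum_le_sum h1
        _ = (1/2) * (∑ n ∈ B, ∑ m ∈ nbr n \ B, ψ n ^ 2)
            + (1/2) * (∑ n ∈ B, ∑ m ∈ nbr n \ B, ψ m ^ 2) := by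
          rw [Finset.sum_add_distrib, ← Finset.mul_sum, ← Finset.mul_sum]
    have hsub : lbox d R ⊆ B := lbox_mono (by omega)
    have hS1 : (∑ n ∈ B, ∑ m ∈ nbr n \ B, ψ n ^ 2) ≤ (2*d : ℝ) * (a (R+1) - a R) := by
      have hz : ∀ n ∈ lbox d R, (∑ m ∈ nbr n \ B, ψ n ^ 2) = 0 := by
        intro n hn
        have : nbr n \ B = ∅ := by
          rw [Finset.sdiff_eq_empty_iff_subset]
          exact nbr_lbox hn
        rw [this, Finset.sum_empty]
      have hsplit : (∑ n ∈ B \ lbox d R, ∑ m ∈ nbr n \ B, ψ n ^ 2)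
          + (∑ n ∈ lbox d R, ∑ m ∈ nbr n \ B, ψ n ^ 2)
          = ∑ n ∈ B, ∑ m ∈ nbr n \ B, ψ n ^ 2 := Finset.sum_sdiff hsub
      rw [Finset.sum_eq_zero hz] at hsplit
      have hbd : (∑ n ∈ B \ lbox d R, ∑ m ∈ nbr n \ B, ψ n ^ 2)
          ≤ ∑ n ∈ B \ lbox d R, (2*d : ℝ) * ψ n ^ 2 := by
        apply Finset.sum_le_sum
        intro n _
        rw [Finset.sum_const, nsmul_eq_mul]
        have hc : ((nbr n \ B).card : ℝ) ≤ (2*d : ℝ) := by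
          have := le_trans (Finset.card_le_card (Finset.sdiff_subset (s := nbr n) (t := B))) (card_nbr_le n)
          exact_mod_cast this
        apply mul_le_mul_of_nonneg_right hc (sq_nonneg _)
      have hdiff : ∑ n ∈ B \ lbox d R, (2*d : ℝ) * ψ n ^ 2
          = (2*d : ℝ) * (a (R+1) - a R) := by
        rw [← Finset.mul_sum, Finset.sum_sdiff_eq_sub hsub]
      linarith
    have hS2 : (∑ n ∈ B, ∑ m ∈ nbr n \ B, ψ m ^ 2) ≤ (2*d : ℝ) * (a (R+2) - a (R+1)) := by
      have := swap_bound (fun m => ψ m ^ 2) (fun m => sq_nonneg _) (R+1)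
      rwa [Finset.sum_sdiff_eq_sub (lbox_mono (by omega : R+1 ≤ R+2))] at this
    push_cast
    linarith
  have h1 : Filter.Tendsto (fun R => a (R+1)) Filter.atTop (nhds A) :=
    hat.comp (Filter.tendsto_add_atTop_nat 1)
  have h2 : Filter.Tendsto (fun R => a (R+2)) Filter.atTop (nhds A) :=
    hat.comp (Filter.tendsto_add_atTop_nat 2)
  have hb : Filter.Tendsto
      (fun R => (d:ℝ) * (a (R+1) - a R) + (d:ℝ) * (a (R+2) - a (R+1)))
      Filter.atTop (nhds 0) := by
    have := (((h1.sub hat).const_mul (d:ℝ)).add ((h2.sub h1).const_mul (d:ℝ)))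
    simpa using this
  have hsq : Filter.Tendsto (fun R => Out ψ (R+1)) Filter.atTop (nhds 0) :=
    squeeze_zero (fun R => out_nonneg ψ (R+1)) key hb
  exact (Filter.tendsto_add_atTop_iff_nat 1).mp hsq

lemma eigenS {V : (Fin d → ℤ) → ℝ} {E : ℝ} {ψ : (Fin d → ℤ) → ℝ}
    (heig : ∀ n, negLap ψ n + V n * ψ n = E * ψ n) (n : Fin d → ℤ) :
    cc V E n * ψ n = S ψ n := by
  have h := heig n
  rw [negLap_eq] at h
  rw [cc]
  linear_combination h

lemma S_split (ψ : (Fin d → ℤ) → ℝ) (B : Finset (Fin d → ℤ)) (n : Fin d → ℤ) :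
    S (fun x => |ψ x|) n
      = S (fun x => if x ∈ B then |ψ x| else 0) n + ∑ m ∈ nbr n \ B, |ψ m| := by
  classical
  unfold S
  rw [Finset.sdiff_eq_filter, Finset.sum_filter, ← Finset.sum_add_distrib]
  apply Finset.sum_congr rfl
  intro m _
  by_cases h : m ∈ B <;> simp [h]

lemma club {V : (Fin d → ℤ) → ℝ} {E : ℝ} {ψ : (Fin d → ℤ) → ℝ}
    (heig : ∀ n, negLap ψ n + V n * ψ n = E * ψ n) (n : Fin d → ℤ) :
    cc V E n * |ψ n| ^ 2 ≤ |ψ n| * S (fun x => |ψ x|) n := by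
  have h1 : cc V E n * |ψ n| ^ 2 = S ψ n * ψ n := by
    rw [sq_abs, pow_two, ← mul_assoc, eigenS heig n]
  rw [h1]
  calc S ψ n * ψ n ≤ |S ψ n * ψ n| := le_abs_self _
    _ = |S ψ n| * |ψ n| := abs_mul _ _
    _ ≤ S (fun x => |ψ x|) n * |ψ n| := by
      apply mul_le_mul_of_nonneg_right _ (abs_nonneg _)
      exact Finset.abs_sum_le_sum_abs _ _
    _ = |ψ n| * S (fun x => |ψ x|) n := mul_comm _ _

lemma no_pos_neighbor_of_zero {V : (Fin d → ℤ) → ℝ} {E : ℝ}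
    (hform : ∀ φ : (Fin d → ℤ) → ℝ, (Function.support φ).Finite →
      E * ∑ᶠ n, φ n ^ 2 ≤ ∑ᶠ n, (φ n * negLap φ n + V n * φ n ^ 2))
    (ψ : (Fin d → ℤ) → ℝ) (hsum : Summable fun n => ψ n ^ 2)
    (heig : ∀ n, negLap ψ n + V n * ψ n = E * ψ n)
    {a b : Fin d → ℤ} (hb : b ∈ nbr a) (ha : ψ a = 0) : ψ b = 0 := by
  classical
  by_contra hbne
  have hub : 0 < |ψ b| := abs_pos.mpr hbne
  set u : (Fin d → ℤ) → ℝ := fun n => |ψ n| with hu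
  set s0 : ℝ := S u a with hs0def
  have hs0 : 0 < s0 := by
    rw [hs0def, S]
    calc (0:ℝ) < |ψ b| := hub
      _ ≤ ∑ m ∈ nbr a, u m :=
        Finset.single_le_sum (fun m _ => abs_nonneg (ψ m)) hb
  obtain ⟨R0, hR0⟩ := exists_lbox a
  -- main inequality for large boxes
  have main : ∀ R : ℕ, a ∈ lbox d R → nbr a ⊆ lbox d R → ∀ t : ℝ,
      2 * t * s0 ≤ Out ψ R + t^2 * cc V E a := by
    intro R haR hnbrR t
    set B := lbox d R with hB
    set f : (Fin d → ℤ) → ℝ := fun n => if n ∈ B then |ψ n| else 0 with hf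
    set dl : (Fin d → ℤ) → ℝ := fun n => if n = a then (1:ℝ) else 0 with hdl
    set φ : (Fin d → ℤ) → ℝ := fun n => f n + t * dl n with hφ
    have hφsupp : ∀ n, n ∉ B → φ n = 0 := by
      intro n hn
      have h1 : f n = 0 := if_neg hn
      have h2 : dl n = 0 := by
        rw [hdl]
        simp only [ite_eq_right_iff]
        intro h; exact absurd (h ▸ haR) hn
      rw [hφ]; simp [h1, h2]
    have hM := master hform φ B hφsupp
    have hSφ : ∀ n, S φ n = S f n + t * S dl n := by
      intro n
      rw [hφ]; unfold S
      rw [Finset.sum_add_distrib, Finset.mul_sum]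
    have hSdl : ∀ n, S dl n = if n ∈ nbr a then 1 else 0 := by
      intro n
      rw [hdl]; unfold S
      rw [Finset.sum_ite_eq' (nbr n) a (fun _ => (1:ℝ))]
      by_cases h : a ∈ nbr n
      · rw [if_pos h, if_pos (nbr_symm.mp h)]
      · rw [if_neg h, if_neg (fun h' => h (nbr_symm.mp h'))]
    have hfa : f a = 0 := by rw [hf]; simp [haR, ha]
    -- expansion of LHS of master
    have hL : ∑ n ∈ B, φ n * S φ n
        = (∑ n ∈ B, f n * S f n) + t * (∑ n ∈ B, f n * S dl n)
          + t * (∑ n ∈ B, dl n * S f n) + t^2 * (∑ n ∈ B, dl n * S dl n) := by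
      calc ∑ n ∈ B, φ n * S φ n
          = ∑ n ∈ B, (f n * S f n + t * (f n * S dl n)
            + t * (dl n * S f n) + t^2 * (dl n * S dl n)) := by
            apply Finset.sum_congr rfl
            intro n _
            rw [hφ]
            simp only []
            rw [hSφ n]
            ring
        _ = _ := by
            rw [Finset.sum_add_distrib, Finset.sum_add_distrib, Finset.sum_add_distrib,
              ← Finset.mul_sum, ← Finset.mul_sum, ← Finset.mul_sum]
    have hA1 : ∑ n ∈ B, f n * S dl n = s0 := by
      calc ∑ n ∈ B, f n * S dl n
          = ∑ n ∈ B, (if n ∈ nbr a then f n else 0) := by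
            apply Finset.sum_congr rfl
            intro n _
            rw [hSdl n]
            split <;> ring
        _ = ∑ n ∈ B.filter (· ∈ nbr a), f n := (Finset.sum_filter _ _).symm
        _ = ∑ n ∈ nbr a, f n := by
            congr 1
            ext n
            rw [Finset.mem_filter]
            exact ⟨fun h => h.2, fun h => ⟨hnbrR h, h⟩⟩
        _ = ∑ n ∈ nbr a, u n := by
            apply Finset.sum_congr rfl
            intro n hn
            rw [hf]
            exact if_pos (hnbrR hn)
        _ = s0 := rfl
    have hSfa : S f a = s0 := by
      unfold S
      apply Finset.sum_congr rfl
      intro n hn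
      rw [hf]
      exact if_pos (hnbrR hn)
    have hA2 : ∑ n ∈ B, dl n * S f n = s0 := by
      calc ∑ n ∈ B, dl n * S f n
          = ∑ n ∈ B, (if n = a then S f n else 0) := by
            apply Finset.sum_congr rfl
            intro n _
            rw [hdl]
            by_cases h : n = a <;> simp [h]
        _ = if a ∈ B then S f a else 0 := Finset.sum_ite_eq' B a (fun n => S f n)
        _ = s0 := by rw [if_pos haR, hSfa]
    have hA3 : ∑ n ∈ B, dl n * S dl n = 0 := by
      apply Finset.sum_eq_zero
      intro n _
      by_cases h : n = a
      · subst h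
        rw [hSdl, if_neg (self_not_mem_nbr n)]
        ring
      · rw [hdl]
        simp [h]
    -- expansion of RHS of master
    have hR : ∑ n ∈ B, cc V E n * φ n ^ 2
        = (∑ n ∈ B, cc V E n * f n ^ 2) + t^2 * cc V E a := by
      calc ∑ n ∈ B, cc V E n * φ n ^ 2
          = ∑ n ∈ B, (cc V E n * f n ^ 2 + (2*t) * (cc V E n * (f n * dl n))
              + t^2 * (cc V E n * dl n ^ 2)) := by
            apply Finset.sum_congr rfl
            intro n _
            rw [hφ]
            simp only []
            ring
        _ = (∑ n ∈ B, cc V E n * f n ^ 2)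
            + (2*t) * (∑ n ∈ B, cc V E n * (f n * dl n))
            + t^2 * (∑ n ∈ B, cc V E n * dl n ^ 2) := by
            rw [Finset.sum_add_distrib, Finset.sum_add_distrib,
              ← Finset.mul_sum, ← Finset.mul_sum]
        _ = _ := by
            have e1 : ∑ n ∈ B, cc V E n * (f n * dl n) = 0 := by
              apply Finset.sum_eq_zero
              intro n _
              by_cases h : n = a
              · subst h; rw [hfa]; ring
              · rw [hdl]; simp [h]
            have e2 : ∑ n ∈ B, cc V E n * dl n ^ 2 = cc V E a := by
              calc ∑ n ∈ B, cc V E n * dl n ^ 2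
                  = ∑ n ∈ B, (if n = a then cc V E n else 0) := by
                    apply Finset.sum_congr rfl
                    intro n _
                    rw [hdl]
                    by_cases h : n = a <;> simp [h]
                _ = if a ∈ B then cc V E a else 0 := Finset.sum_ite_eq' B a _
                _ = cc V E a := if_pos haR
            rw [e1, e2]
            ring
    -- club chain
    have hclub : ∑ n ∈ B, cc V E n * f n ^ 2 ≤ ∑ n ∈ B, f n * S f n + Out ψ R := by
      have step1 : ∑ n ∈ B, cc V E n * f n ^ 2 = ∑ n ∈ B, cc V E n * u n ^ 2 := by
        apply Finset.sum_congr rfl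
        intro n hn
        simp [hf, hu, hn]
      have step2 : ∑ n ∈ B, cc V E n * u n ^ 2 ≤ ∑ n ∈ B, u n * S u n :=
        Finset.sum_le_sum fun n _ => club heig n
      have step3 : ∑ n ∈ B, u n * S u n = ∑ n ∈ B, f n * S f n + Out ψ R := by
        rw [Out, ← Finset.sum_add_distrib]
        apply Finset.sum_congr rfl
        intro n hn
        rw [hu]
        rw [S_split ψ B n]
        rw [← hf]
        have hfn : f n = |ψ n| := if_pos hn
        rw [hfn]
        ring
      linarith
    -- combine
    rw [hL, hA1, hA2, hA3] at hM
    rw [hR] at hM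
    linarith
  -- take the limit in R
  have hlim : ∀ t : ℝ, 2 * t * s0 ≤ t^2 * cc V E a := by
    intro t
    have hev : ∀ᶠ R in Filter.atTop, 2*t*s0 - t^2 * cc V E a ≤ Out ψ R := by
      rw [Filter.eventually_atTop]
      refine ⟨R0 + 1, fun R hR => ?_⟩
      have h1 : a ∈ lbox d R := hR0 R (by omega)
      have h2 : nbr a ⊆ lbox d R :=
        subset_trans (nbr_lbox (hR0 R0 le_rfl)) (lbox_mono (by omega))
      linarith [main R h1 h2 t]
    have := ge_of_tendsto (out_tendsto ψ hsum) hev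
    linarith
  -- contradiction
  rcases le_or_gt (cc V E a) 0 with hc | hc
  · have := hlim 1
    nlinarith
  · have h2 := hlim (s0 / cc V E a)
    have hcne : cc V E a ≠ 0 := ne_of_gt hc
    have he : (s0 / cc V E a)^2 * cc V E a = s0 * (s0 / cc V E a) := by
      field_simp
    rw [he] at h2
    have hpos : 0 < s0 / cc V E a := div_pos hs0 hc
    nlinarith

lemma edge_sign {V : (Fin d → ℤ) → ℝ} {E : ℝ}
    (hform : ∀ φ : (Fin d → ℤ) → ℝ, (Function.support φ).Finite →
      E * ∑ᶠ n, φ n ^ 2 ≤ ∑ᶠ n, (φ n * negLap φ n + V n * φ n ^ 2))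
    (ψ : (Fin d → ℤ) → ℝ) (hsum : Summable fun n => ψ n ^ 2)
    (heig : ∀ n, negLap ψ n + V n * ψ n = E * ψ n) :
    ∀ a, ∀ b ∈ nbr a, ψ a * ψ b = |ψ a| * |ψ b| := by
  classical
  set u : (Fin d → ℤ) → ℝ := fun n => |ψ n| with hu
  set D : ℕ → ℝ := fun R => ∑ n ∈ lbox d R, ∑ m ∈ nbr n, (|ψ n| * |ψ m| - ψ n * ψ m)
    with hD
  have hterm : ∀ n m : Fin d → ℤ, 0 ≤ |ψ n| * |ψ m| - ψ n * ψ m := by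
    intro n m
    have h := le_abs_self (ψ n * ψ m)
    rw [abs_mul] at h
    linarith
  have hDnonneg : ∀ R, 0 ≤ D R := fun R =>
    Finset.sum_nonneg fun n _ => Finset.sum_nonneg fun m _ => hterm n m
  have hDout : ∀ R, D R ≤ Out ψ R := by
    intro R
    set B := lbox d R with hB
    set f : (Fin d → ℤ) → ℝ := fun n => if n ∈ B then |ψ n| else 0 with hf
    have hfsupp : ∀ n, n ∉ B → f n = 0 := fun n hn => if_neg hn
    have hM := master hform f B hfsupp
    have h1 : ∀ n : Fin d → ℤ, ∑ m ∈ nbr n, (|ψ n| * |ψ m| - ψ n * ψ m)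
        = u n * S u n - ψ n * S ψ n := by
      intro n
      unfold S
      rw [Finset.mul_sum, Finset.mul_sum, ← Finset.sum_sub_distrib]
    have h2 : ∀ n : Fin d → ℤ, ψ n * S ψ n = cc V E n * u n ^ 2 := by
      intro n
      rw [← eigenS heig n, hu]
      simp only [sq_abs]
      ring
    have hDeq : D R = ∑ n ∈ B, u n * S u n - ∑ n ∈ B, cc V E n * u n ^ 2 := by
      rw [hD]
      simp only []
      rw [← Finset.sum_sub_distrib]
      apply Finset.sum_congr rfl
      intro n _
      rw [h1 n, h2 n]
    have step3 : ∑ n ∈ B, u n * S u n = ∑ n ∈ B, f n * S f n + Out ψ R := by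
      rw [Out, ← Finset.sum_add_distrib]
      apply Finset.sum_congr rfl
      intro n hn
      rw [hu]
      rw [S_split ψ B n, ← hf]
      have hfn : f n = |ψ n| := if_pos hn
      rw [hfn]
      ring
    have step4 : ∑ n ∈ B, cc V E n * f n ^ 2 = ∑ n ∈ B, cc V E n * u n ^ 2 := by
      apply Finset.sum_congr rfl
      intro n hn
      simp [hf, hu, hn]
    rw [hDeq]
    linarith
  have hDmono : ∀ R R' : ℕ, R ≤ R' → D R ≤ D R' := by
    intro R R' h
    apply Finset.sum_le_sum_of_subset_of_nonneg (lbox_mono h)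
    intro n _ _
    exact Finset.sum_nonneg fun m _ => hterm n m
  have hD0 : ∀ R, D R = 0 := by
    intro R
    refine le_antisymm ?_ (hDnonneg R)
    have hev : ∀ᶠ R' in Filter.atTop, D R ≤ Out ψ R' := by
      rw [Filter.eventually_atTop]
      exact ⟨R, fun R' h => le_trans (hDmono R R' h) (hDout R')⟩
    exact ge_of_tendsto (out_tendsto ψ hsum) hev
  intro a b hb
  obtain ⟨R, hR⟩ := mem_lbox_self a
  have h1 := (Finset.sum_eq_zero_iff_of_nonneg
    (fun n _ => Finset.sum_nonneg fun m _ => hterm n m)).mp (hD0 R) a hR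
  have h2 := (Finset.sum_eq_zero_iff_of_nonneg (fun m _ => hterm a m)).mp h1 b hb
  linarith

lemma negLap_lin (ψ₁ ψ₂ : (Fin d → ℤ) → ℝ) (c : ℝ) (n : Fin d → ℤ) :
    negLap (fun m => ψ₁ m - c * ψ₂ m) n = negLap ψ₁ n - c * negLap ψ₂ n := by
  rw [negLap_eq, negLap_eq, negLap_eq]
  have hS : S (fun m => ψ₁ m - c * ψ₂ m) n = S ψ₁ n - c * S ψ₂ n := by
    unfold S
    rw [Finset.sum_sub_distrib, Finset.mul_sum]
  rw [hS]
  ring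

lemma negLap_smul (ψ : (Fin d → ℤ) → ℝ) (c : ℝ) (n : Fin d → ℤ) :
    negLap (fun m => c * ψ m) n = c * negLap ψ n := by
  have := negLap_lin (fun _ => 0) ψ (-c) n
  have h0 : negLap (fun _ => 0) n = 0 := by
    rw [negLap_eq]
    unfold S
    simp
  simp only [zero_sub, neg_mul, neg_neg, h0] at this
  convert this using 2


/-- If the lowest spectral point `E = inf σ(H_V) > -∞` of the discrete Schrödinger
operator `H_V = -Δ + V` is an eigenvalue (expressed by: `E` admits an `ℓ²`
eigenvector, and `H_V - E ≥ 0` as a quadratic form on finitely supported vectors),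
then the corresponding eigenvector can be chosen strictly positive and `E` is a
simple eigenvalue: every `ℓ²` eigenvector for `E` is a multiple of it. -/
theorem ground_state_simple_and_positive {d : ℕ} (V : (Fin d → ℤ) → ℝ) (E : ℝ)
    (hform : ∀ φ : (Fin d → ℤ) → ℝ, (Function.support φ).Finite →
      E * ∑ᶠ n, φ n ^ 2 ≤ ∑ᶠ n, (φ n * negLap φ n + V n * φ n ^ 2))
    (heig : ∃ ψ : (Fin d → ℤ) → ℝ, ψ ≠ 0 ∧ Summable (fun n => ψ n ^ 2) ∧
      ∀ n, negLap ψ n + V n * ψ n = E * ψ n) :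
    ∃ ψ : (Fin d → ℤ) → ℝ,
      (∀ n, 0 < ψ n) ∧ Summable (fun n => ψ n ^ 2) ∧
      (∀ n, negLap ψ n + V n * ψ n = E * ψ n) ∧
      (∀ φ : (Fin d → ℤ) → ℝ, Summable (fun n => φ n ^ 2) →
        (∀ n, negLap φ n + V n * φ n = E * φ n) →
        ∃ c : ℝ, ∀ n, φ n = c * ψ n) := by
  classical
  obtain ⟨ψ, hne, hsum, heig⟩ := heig
  have keyzero : ∀ χ : (Fin d → ℤ) → ℝ, Summable (fun n => χ n ^ 2) →
      (∀ n, negLap χ n + V n * χ n = E * χ n) → ∀ n0, χ n0 = 0 → ∀ n, χ n = 0 := by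
    intro χ hχs hχe n0 h0
    exact spread (Q := fun n => χ n = 0) h0
      (fun a ha m hm => no_pos_neighbor_of_zero hform χ hχs hχe hm ha)
  have hnv : ∀ n, ψ n ≠ 0 := by
    intro n hn
    exact hne (funext (keyzero ψ hsum heig n hn))
  have hedge := edge_sign hform ψ hsum heig
  set base : Fin d → ℤ := fun _ => 0 with hbase
  set σ : ℝ := if 0 < ψ base then 1 else -1 with hσ
  have hσ2 : σ * σ = 1 := by rw [hσ]; split_ifs <;> norm_num
  have hpos : ∀ n, 0 < σ * ψ n := by
    refine spread (n0 := base) ?_ ?_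
    · rw [hσ]
      split_ifs with h
      · simpa using h
      · have hlt : ψ base < 0 := lt_of_le_of_ne (not_lt.mp h) (hnv base)
        nlinarith
    · intro a ha m hm
      have h := hedge a m hm
      have hprod : 0 < ψ a * ψ m := by
        rw [h]
        exact mul_pos (abs_pos.mpr (hnv a)) (abs_pos.mpr (hnv m))
      by_contra hng
      push_neg at hng
      have h3 : (σ * ψ a) * (σ * ψ m) ≤ 0 :=
        mul_nonpos_of_nonneg_of_nonpos ha.le hng
      have h4 : (σ * ψ a) * (σ * ψ m) = ψ a * ψ m := by
        calc (σ * ψ a) * (σ * ψ m) = (σ * σ) * (ψ a * ψ m) := by ring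
          _ = ψ a * ψ m := by rw [hσ2, one_mul]
      rw [h4] at h3
      linarith
  refine ⟨fun n => σ * ψ n, hpos, ?_, ?_, ?_⟩
  · exact hsum.congr fun n => by
      calc ψ n ^ 2 = (σ * σ) * ψ n ^ 2 := by rw [hσ2, one_mul]
        _ = (σ * ψ n) ^ 2 := by ring
  · intro n
    rw [negLap_smul ψ σ n]
    linear_combination σ * heig n
  · intro φ hφsum hφeig
    have hne0 : σ * ψ base ≠ 0 := ne_of_gt (hpos base)
    set c : ℝ := φ base / (σ * ψ base) with hc
    refine ⟨c, ?_⟩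
    set η : (Fin d → ℤ) → ℝ := fun n => φ n - (c * σ) * ψ n with hη
    have hηeig : ∀ n, negLap η n + V n * η n = E * η n := by
      intro n
      have h1 : negLap η n = negLap φ n - (c * σ) * negLap ψ n := by
        rw [hη, negLap_lin]
      rw [hη]
      simp only []
      rw [h1]
      linear_combination hφeig n - (c * σ) * heig n
    have hmul : Summable fun n => φ n * ψ n := by
      apply Summable.of_abs
      apply Summable.of_nonneg_of_le (fun n => abs_nonneg _) (fun n => ?_)
        (((hφsum.add hsum)).mul_left (1/2))
      rw [abs_mul]
      have h1 : |φ n| ^ 2 = φ n ^ 2 := sq_abs _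
      have h2 : |ψ n| ^ 2 = ψ n ^ 2 := sq_abs _
      nlinarith [sq_nonneg (|φ n| - |ψ n|)]
    have hηsum : Summable fun n => η n ^ 2 := by
      have hS : Summable fun n =>
          (φ n ^ 2 + (c * σ)^2 * ψ n ^ 2) - (2 * (c * σ)) * (φ n * ψ n) :=
        (hφsum.add (hsum.mul_left ((c * σ)^2))).sub (hmul.mul_left (2 * (c * σ)))
      apply hS.congr
      intro n
      rw [hη]
      ring
    have hη0 : η base = 0 := by
      rw [hη]
      simp only []
      rw [hc]
      have hσne : σ ≠ 0 := left_ne_zero_of_mul hne0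
      have hψne := hnv base
      field_simp
      ring
    have hz := keyzero η hηsum hηeig base hη0
    intro n
    have h := hz n
    rw [hη] at h
    simp only [] at h
    have : φ n = (c * σ) * ψ n := by linarith
    rw [this]
    ring
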